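/- Let u be a unit vector with cos φ = g(u,Su), |cos φ| < 1. Then e₁ = (u+S³u)/√(2(1−cos φ)) and e₂ = (−u+S³u)/√(2(1+cos φ)) are g-orthonormal, and g̃(e₁,e₁) = (2cos φ−1)/(1−cos φ), g̃(e₂,e₂) = (2cos φ+1)/(1+cos φ), g̃(e₁,e₂) = 0. -/

import Mathlib

theorem circle_basis_beta3 {V : Type*} [AddCommGroup V] [Module ℝ V]
    (g : V →ₗ[ℝ] V →ₗ[ℝ] ℝ) (S : V →ₗ[ℝ] V)
    (hsym : ∀ u v : V, g u v = g v u)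
    (hpos : ∀ v : V, v ≠ 0 → 0 < g v v)
    (hS4 : ∀ v : V, S (S (S (S v))) = -v)
    (hcomp : ∀ u v : V, g (S u) (S v) = g u v)
    (gt : V → V → ℝ) (hgt : ∀ u v : V, gt u v = g u (S v) + g (S u) v)
    (u : V) (hu : g u u = 1)
    (c : ℝ) (hc : c = g u (S u)) (hc1 : -1 < c) (hc2 : c < 1)
    (e₁ e₂ : V)
    (he₁ : e₁ = (Real.sqrt (2 * (1 - c)))⁻¹ • (u + S (S (S u))))
    (he₂ : e₂ = (Real.sqrt (2 * (1 + c)))⁻¹ • (-u + S (S (S u)))) :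
    (g e₁ e₁ = 1 ∧ g e₂ e₂ = 1 ∧ g e₁ e₂ = 0) ∧
    gt e₁ e₁ = (2 * c - 1) / (1 - c) ∧
    gt e₂ e₂ = (2 * c + 1) / (1 + c) ∧
    gt e₁ e₂ = 0 := by
  have h1c : (0:ℝ) < 2 * (1 - c) := by linarith
  have h2c : (0:ℝ) < 2 * (1 + c) := by linarith
  set s1 := Real.sqrt (2 * (1 - c)) with hs1def
  set s2 := Real.sqrt (2 * (1 + c)) with hs2def
  have hs1 : s1 * s1 = 2 * (1 - c) := Real.mul_self_sqrt h1c.le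
  have hs2 : s2 * s2 = 2 * (1 + c) := Real.mul_self_sqrt h2c.le
  have hs1n : s1 ≠ 0 := by positivity
  have hs2n : s2 ≠ 0 := by positivity
  -- basic inner products
  have p2 : g u (S u) = c := hc.symm
  have p3 : g (S u) u = c := by rw [hsym]; exact p2
  have p5 : g (S (S u)) u = 0 := by
    have h1 : g (S (S u)) u = g (S (S (S u))) (S u) := (hcomp _ _).symm
    have h2 : g (S (S (S u))) (S u) = g (S (S (S (S u)))) (S (S u)) := (hcomp _ _).symm
    have h3 : g (S (S (S (S u)))) (S (S u)) = - g (S (S u)) u := by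
      rw [hS4, map_neg, LinearMap.neg_apply, hsym]
    linarith [h1, h2, h3] 
  have p4 : g u (S (S u)) = 0 := by rw [hsym]; exact p5
  have hne1 : (1:ℝ) - c ≠ 0 := by linarith
  have hne2 : (1:ℝ) + c ≠ 0 := by linarith
  have p6 : g u (S (S (S u))) = -c := by
    have h := hcomp u (S (S (S u)))
    rw [hS4, map_neg, p3] at h
    exact h.symm
  have p7 : g (S (S (S u))) u = -c := by rw [hsym]; exact p6
  have p8 : g (S u) (S (S (S u))) = 0 := by
    have := hcomp u (S (S u)); rw [this, p4]
  have p9 : g (S (S (S u))) (S u) = 0 := by rw [hsym]; exact p8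
  have p10 : g (S (S (S u))) (S (S (S u))) = 1 := by
    rw [hcomp, hcomp, hcomp, hu]
  subst he₁ he₂
  simp only [map_add, map_smul, map_neg, LinearMap.add_apply, LinearMap.smul_apply,
    LinearMap.neg_apply, smul_eq_mul, hS4, hgt, hu, p2, p3, p4, p5, p6, p7, p8, p9, p10]
  refine ⟨⟨?_, ?_, ?_⟩, ?_, ?_, ?_⟩
  · field_simp
    rw [sq, hs1]; ring
  · field_simp
    rw [sq, hs2]; ring
  · ring_nf
  · field_simp
    rw [sq, hs1]; ring
  · field_simp
    rw [sq, hs2]; ring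
  · ring_nf
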